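/- Let (W,S) be a finitely generated odd-angled Coxeter system with Coxeter matrix (m_{ij}). Suppose there exist three distinct indices a,b,c such that m_{ab} and m_{ac} are finite, divisible by 5 and not divisible by 3, and m_{bc} is finite and divisible by 3; suppose further that for every other unordered pair of distinct indices {i,j}, either m_{ij} = ∞ or 3 divides m_{ij}. Then W has a proper finite-index subgroup generated by reflections. -/

import Mathlib

namespace St5Aux

/-- Labels for the six chamber families. -/
inductive L6 : Type | d0 | d1 | a0 | a1 | bb | cc
deriving DecidableEq

instance : Fintype L6 :=
  Fintype.ofList [L6.d0, L6.d1, L6.a0, L6.a1, L6.bb, L6.cc] (fun x => by cases x <;> simp)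

/-- Labels for the two pendant families. -/
inductive L2 : Type | p1 | p2
deriving DecidableEq

instance : Fintype L2 :=
  Fintype.ofList [L2.p1, L2.p2] (fun x => by cases x <;> simp)

/-- The finite set on which our permutation representation acts. -/
abbrev V (m : ℕ) (E : Type*) : Type _ := (ZMod m × L6) ⊕ (E × (ZMod m × L2))

variable {m : ℕ} {E : Type*}

open L6 L2

def xf : V m E → V m E
  | .inl (k, d0) => .inl (k, a0)
  | .inl (k, a0) => .inl (k, d0)
  | .inl (k, d1) => .inl (k, a1)
  | .inl (k, a1) => .inl (k, d1)
  | v => v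

lemma xf_invol : Function.Involutive (xf (m := m) (E := E)) := by
  rintro (⟨k, (_|_|_|_|_|_)⟩ | ⟨e, k, t⟩) <;> rfl

def yf : V m E → V m E
  | .inl (k, d0) => .inl (k, d1)
  | .inl (k, d1) => .inl (k, d0)
  | .inl (k, a0) => .inl (k, bb)
  | .inl (k, bb) => .inl (k, a0)
  | v => v

lemma yf_invol : Function.Involutive (yf (m := m) (E := E)) := by
  rintro (⟨k, (_|_|_|_|_|_)⟩ | ⟨e, k, t⟩) <;> rfl

def zf : V m E → V m E
  | .inl (k, d0) => .inl (k - 1, d1)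
  | .inl (k, d1) => .inl (k + 1, d0)
  | .inl (k, a0) => .inl (k, cc)
  | .inl (k, cc) => .inl (k, a0)
  | v => v

lemma zf_invol : Function.Involutive (zf (m := m) (E := E)) := by
  rintro (⟨k, (_|_|_|_|_|_)⟩ | ⟨e, k, t⟩) <;> simp [zf] <;> ring

variable [DecidableEq E] in
def sf (i : E) : V m E → V m E
  | .inl (k, d1) => .inr (i, k, p1)
  | .inl (k, a0) => .inr (i, k, p2)
  | .inr (j, k, p1) => if j = i then .inl (k, d1) else .inr (j, k, p1)
  | .inr (j, k, p2) => if j = i then .inl (k, a0) else .inr (j, k, p2)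
  | v => v

variable [DecidableEq E] in
lemma sf_invol (i : E) : Function.Involutive (sf (m := m) i) := by
  rintro (⟨k, (_|_|_|_|_|_)⟩ | ⟨e, k, (_|_)⟩) <;> simp [sf] <;>
    by_cases h : e = i <;> simp [h, sf]

/-- The permutations. -/
def X : Equiv.Perm (V m E) := xf_invol.toPerm
def Y : Equiv.Perm (V m E) := yf_invol.toPerm
def Z : Equiv.Perm (V m E) := zf_invol.toPerm

@[simp] lemma X_apply (v : V m E) : X v = xf v := rfl
@[simp] lemma Y_apply (v : V m E) : Y v = yf v := rfl
@[simp] lemma Z_apply (v : V m E) : Z v = zf v := rfl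

section SDef
variable [DecidableEq E]

def S (i : E) : Equiv.Perm (V m E) := (sf_invol i).toPerm

@[simp] lemma S_apply (i : E) (v : V m E) : S i v = sf i v := rfl

end SDef

end St5Aux

section Relations

namespace St5Aux
open L6 L2
variable {m : ℕ} {E : Type*}

lemma X_sq : (X (m := m) (E := E)) * X = 1 := by
  ext v; exact xf_invol v

lemma Y_sq : (Y (m := m) (E := E)) * Y = 1 := by
  ext v; exact yf_invol v

lemma Z_sq : (Z (m := m) (E := E)) * Z = 1 := by
  ext v; exact zf_invol v

lemma S_sq [DecidableEq E] (i : E) : (S (m := m) i) * S i = 1 := by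
  ext v; exact sf_invol i v

lemma XY_pow : ((X (m := m) (E := E)) * Y) ^ 5 = 1 := by
  ext v
  simp only [pow_succ, pow_zero, one_mul, Equiv.Perm.mul_apply, Equiv.Perm.one_apply]
  rcases v with ⟨k, (_|_|_|_|_|_)⟩ | ⟨e, k, t⟩ <;> rfl

lemma XZ_pow : ((X (m := m) (E := E)) * Z) ^ 5 = 1 := by
  ext v
  simp only [pow_succ, pow_zero, one_mul, Equiv.Perm.mul_apply, Equiv.Perm.one_apply]
  rcases v with ⟨k, (_|_|_|_|_|_)⟩ | ⟨e, k, t⟩ <;>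
    simp [xf, zf]

/-- The shift permutation. -/
def rotf (t : ZMod m) : V m E → V m E
  | .inl (k, d0) => .inl (k - t, d0)
  | .inl (k, d1) => .inl (k + t, d1)
  | v => v

def rot (t : ZMod m) : Equiv.Perm (V m E) where
  toFun := rotf t
  invFun := rotf (-t)
  left_inv := by rintro (⟨k, (_|_|_|_|_|_)⟩ | ⟨e, k, s⟩) <;> simp [rotf] <;> ring
  right_inv := by rintro (⟨k, (_|_|_|_|_|_)⟩ | ⟨e, k, s⟩) <;> simp [rotf] <;> ring

@[simp] lemma rot_apply (t : ZMod m) (v : V m E) : rot t v = rotf t v := rfl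

/-- The label 3-cycle permutation. -/
def c3f : V m E → V m E
  | .inl (k, a0) => .inl (k, cc)
  | .inl (k, cc) => .inl (k, bb)
  | .inl (k, bb) => .inl (k, a0)
  | v => v

def c3invf : V m E → V m E
  | .inl (k, a0) => .inl (k, bb)
  | .inl (k, bb) => .inl (k, cc)
  | .inl (k, cc) => .inl (k, a0)
  | v => v

def C3 : Equiv.Perm (V m E) where
  toFun := c3f
  invFun := c3invf
  left_inv := by rintro (⟨k, (_|_|_|_|_|_)⟩ | ⟨e, k, s⟩) <;> rfl
  right_inv := by rintro (⟨k, (_|_|_|_|_|_)⟩ | ⟨e, k, s⟩) <;> rfl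

@[simp] lemma C3_apply (v : V m E) : C3 v = c3f v := rfl

lemma YZ_eq : (Y (m := m) (E := E)) * Z = rot 1 * C3 := by
  ext v
  rcases v with ⟨k, (_|_|_|_|_|_)⟩ | ⟨e, k, t⟩ <;>
    simp [Equiv.Perm.mul_apply, yf, zf, rotf, c3f]

lemma rot_mul (t u : ZMod m) : (rot (E := E) t) * rot u = rot (t + u) := by
  ext v
  rcases v with ⟨k, (_|_|_|_|_|_)⟩ | ⟨e, k, s⟩ <;> simp [Equiv.Perm.mul_apply, rotf] <;> ring

lemma rot_zero : (rot (E := E) (0 : ZMod m)) = 1 := by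
  ext v
  rcases v with ⟨k, (_|_|_|_|_|_)⟩ | ⟨e, k, s⟩ <;> simp [rotf]

lemma rot_pow (t : ZMod m) (n : ℕ) : (rot (E := E) t) ^ n = rot ((n : ZMod m) * t) := by
  induction n with
  | zero => simp [rot_zero]
  | succ n ih =>
      rw [pow_succ, ih, rot_mul]
      congr 1
      push_cast
      ring

lemma C3_cube : (C3 (m := m) (E := E)) ^ 3 = 1 := by
  ext v
  simp only [pow_succ, pow_zero, one_mul, Equiv.Perm.mul_apply, Equiv.Perm.one_apply]
  rcases v with ⟨k, (_|_|_|_|_|_)⟩ | ⟨e, k, t⟩ <;> rfl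

lemma rot_C3_comm (t : ZMod m) : Commute (rot (E := E) t) C3 := by
  unfold Commute SemiconjBy
  ext v
  rcases v with ⟨k, (_|_|_|_|_|_)⟩ | ⟨e, k, s⟩ <;>
    simp [Equiv.Perm.mul_apply, rotf, c3f]

lemma YZ_pow (h3 : 3 ∣ m) : ((Y (m := m) (E := E)) * Z) ^ m = 1 := by
  obtain ⟨t, ht⟩ := h3
  rw [YZ_eq, (rot_C3_comm 1).mul_pow, rot_pow]
  have h1 : ((m : ZMod m) : ZMod m) * 1 = 0 := by simp
  rw [h1, rot_zero, one_mul, ht, pow_mul, C3_cube, one_pow]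

section Spart
variable [DecidableEq E]

lemma SX_pow (i : E) : ((S (m := m) i) * X) ^ 3 = 1 := by
  ext v
  simp only [pow_succ, pow_zero, one_mul, Equiv.Perm.mul_apply, Equiv.Perm.one_apply]
  rcases v with ⟨k, (_|_|_|_|_|_)⟩ | ⟨e, k, (_|_)⟩
  case' inr.p1 | inr.p2 =>
    by_cases h : e = i
  all_goals simp [sf, xf, *]

lemma SY_pow (i : E) : ((S (m := m) i) * Y) ^ 3 = 1 := by
  ext v
  simp only [pow_succ, pow_zero, one_mul, Equiv.Perm.mul_apply, Equiv.Perm.one_apply]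
  rcases v with ⟨k, (_|_|_|_|_|_)⟩ | ⟨e, k, (_|_)⟩
  case' inr.p1 | inr.p2 =>
    by_cases h : e = i
  all_goals simp [sf, yf, *]

lemma SZ_pow (i : E) : ((S (m := m) i) * Z) ^ 3 = 1 := by
  ext v
  simp only [pow_succ, pow_zero, one_mul, Equiv.Perm.mul_apply, Equiv.Perm.one_apply]
  rcases v with ⟨k, (_|_|_|_|_|_)⟩ | ⟨e, k, (_|_)⟩
  case' inr.p1 | inr.p2 =>
    by_cases h : e = i
  all_goals simp [sf, zf, *]

lemma SS_pow {i j : E} (hij : i ≠ j) : ((S (m := m) i) * S j) ^ 3 = 1 := by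
  ext v
  simp only [pow_succ, pow_zero, one_mul, Equiv.Perm.mul_apply, Equiv.Perm.one_apply]
  rcases v with ⟨k, (_|_|_|_|_|_)⟩ | ⟨e, k, (_|_)⟩
  case' inr.p1 | inr.p2 =>
    by_cases h : e = i
    case' pos => subst h
    case' neg => by_cases h2 : e = j
  all_goals simp [sf, hij, hij.symm, Ne.symm, *]

end Spart

/-- If `(u*v)^n = 1` then `(v*u)^n = 1`. -/
lemma swap_pow {G : Type*} [Group G] {u v : G} {n : ℕ} (h : (u * v) ^ n = 1) :
    (v * u) ^ n = 1 := by
  have key : ∀ k : ℕ, (v * u) ^ k * v = v * (u * v) ^ k := by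
    intro k
    induction k with
    | zero => simp
    | succ k ih =>
        rw [pow_succ, pow_succ, mul_assoc, show v * u * v = v * (u * v) by group,
          ← mul_assoc, ih, mul_assoc]
  have h2 : (v * u) ^ n * v = v := by rw [key, h, mul_one]
  calc (v * u) ^ n = (v * u) ^ n * v * v⁻¹ := by group
  _ = v * v⁻¹ := by rw [h2]
  _ = 1 := by group

lemma pow_of_dvd {G : Type*} [Group G] {g : G} {d n : ℕ} (h : g ^ d = 1) (hd : d ∣ n) :
    g ^ n = 1 := by
  obtain ⟨t, rfl⟩ := hd
  rw [pow_mul, h, one_pow]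

end St5Aux
end Relations

namespace St5Aux
open L6 L2

section RotPow
variable {m : ℕ} {E : Type*}

lemma rotC3_pow_d0 (n : ℕ) (k : ZMod m) :
    (((rot (E := E) 1) * C3 : Equiv.Perm (V m E)) ^ n) (Sum.inl (k, d0)) = Sum.inl (k - n, d0) := by
  induction n with
  | zero => simp
  | succ n ih =>
      have h1 : ∀ k' : ZMod m, ((rot (E := E) 1) * C3 : Equiv.Perm (V m E)) (Sum.inl (k', d0))
          = Sum.inl (k' - 1, d0) := by
        intro k'
        simp [Equiv.Perm.mul_apply, c3f, rotf]
      rw [pow_succ', Equiv.Perm.mul_apply, ih, h1]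
      congr 1
      push_cast
      ring

end RotPow

section Cox

variable {B W : Type*} [Group W] [DecidableEq B] {M : CoxeterMatrix B}

/-- The extra indices. -/
abbrev EE (a b c : B) : Type _ := {i : B // ¬(i = a) ∧ ¬(i = b) ∧ ¬(i = c)}

/-- The permutation images of the generators. -/
def Fmap (a b c : B) (m : ℕ) : B → Equiv.Perm (V m (EE a b c)) := fun i =>
  if h1 : i = a then X
  else if h2 : i = b then Y
  else if h3 : i = c then Z
  else S ⟨i, h1, h2, h3⟩

lemma Fmap_a (a b c : B) (m : ℕ) : Fmap a b c m a = X := by simp [Fmap]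

lemma Fmap_b (a b c : B) (m : ℕ) (hab : a ≠ b) : Fmap a b c m b = Y := by
  simp [Fmap, Ne.symm hab]

lemma Fmap_c (a b c : B) (m : ℕ) (hac : a ≠ c) (hbc : b ≠ c) : Fmap a b c m c = Z := by
  simp [Fmap, Ne.symm hac, Ne.symm hbc]

lemma Fmap_e (a b c : B) (m : ℕ) (i : B) (h1 : ¬(i = a)) (h2 : ¬(i = b)) (h3 : ¬(i = c)) :
    Fmap a b c m i = S ⟨i, h1, h2, h3⟩ := by
  simp [Fmap, h1, h2, h3]

variable (cs : CoxeterSystem M W)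

/-- Powers of the rotation in the dihedral subgroup. -/
def uW (b c : B) (m : ℕ) [NeZero m] (k : ZMod m) : W := (cs.simple b * cs.simple c) ^ k.val

/-- The transversal words. -/
def wvW (a b c : B) (m : ℕ) [NeZero m] : V m (EE a b c) → W
  | .inl (k, .d0) => uW cs b c m k
  | .inl (k, .d1) => uW cs b c m k * cs.simple b
  | .inl (k, .a0) => uW cs b c m k * cs.simple a
  | .inl (k, .a1) => uW cs b c m k * cs.simple b * cs.simple a
  | .inl (k, .bb) => uW cs b c m k * cs.simple a * cs.simple b
  | .inl (k, .cc) => uW cs b c m k * cs.simple a * cs.simple c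
  | .inr (i, k, .p1) => uW cs b c m k * cs.simple b * cs.simple (i : B)
  | .inr (i, k, .p2) => uW cs b c m k * cs.simple a * cs.simple (i : B)

lemma uW_succ (b c : B) (m : ℕ) [NeZero m] (hm : (cs.simple b * cs.simple c) ^ m = 1)
    (hm1 : 1 < m) (k : ZMod m) :
    uW cs b c m (k + 1) = uW cs b c m k * (cs.simple b * cs.simple c) := by
  haveI : Fact (1 < m) := ⟨hm1⟩
  unfold uW
  rw [ZMod.val_add, ZMod.val_one, ← pow_eq_pow_mod _ hm, pow_succ]

end Cox
end St5Aux

namespace St5Aux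
open L6 L2

section Cox2

variable {B W : Type*} [Group W] [DecidableEq B] {M : CoxeterMatrix B}
variable (cs : CoxeterSystem M W)
variable {a b c : B} (hab : a ≠ b) (hac : a ≠ c) (hbc : b ≠ c)
variable (m : ℕ) [NeZero m]
variable (f : W →* Equiv.Perm (V m (EE a b c)))
variable (hfs : ∀ i : B, f (cs.simple i) = Fmap a b c m i)

/-- The base point. -/
def x0 : V m (EE a b c) := Sum.inl (0, d0)

section withhyp

variable (hm : (cs.simple b * cs.simple c) ^ m = 1)

include hfs hab hac hbc in
lemma f_u (k : ZMod m) :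
    f (uW cs b c m k) = ((rot 1 * C3 : Equiv.Perm (V m (EE a b c))) ^ k.val) := by
  unfold uW
  rw [map_pow, map_mul, hfs b, hfs c, Fmap_b a b c m hab, Fmap_c a b c m hac hbc, YZ_eq]

include hfs hab hac hbc in
lemma f_u_d0 (k : ZMod m) :
    f (uW cs b c m k) (Sum.inl (k, d0)) = x0 (a := a) (b := b) (c := c) m := by
  rw [f_u cs hab hac hbc m f hfs, rotC3_pow_d0]
  unfold x0
  congr 2
  rw [ZMod.natCast_val, ZMod.cast_id, sub_self]

include hfs hab hac hbc in
/-- Transversal property: the word attached to `v` maps `v` to the base point. -/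
lemma trans_L : ∀ v : V m (EE a b c),
    f (wvW cs a b c m v) v = x0 (a := a) (b := b) (c := c) m := by
  have hb' := Fmap_b a b c m hab
  have hc' := Fmap_c a b c m hac hbc
  have ha' := Fmap_a a b c m
  have hud0 := f_u_d0 cs hab hac hbc m f hfs
  rintro (⟨k, (_|_|_|_|_|_)⟩ | ⟨i, k, (_|_)⟩)
  · exact hud0 k
  · simp only [wvW, map_mul, Equiv.Perm.mul_apply, hfs, hb', Y_apply, yf]
    exact hud0 k
  · simp only [wvW, map_mul, Equiv.Perm.mul_apply, hfs, ha', X_apply, xf]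
    exact hud0 k
  · simp only [wvW, map_mul, Equiv.Perm.mul_apply, hfs, ha', hb', X_apply, Y_apply, xf, yf]
    exact hud0 k
  · simp only [wvW, map_mul, Equiv.Perm.mul_apply, hfs, ha', hb', X_apply, Y_apply, xf, yf]
    exact hud0 k
  · simp only [wvW, map_mul, Equiv.Perm.mul_apply, hfs, ha', hc', X_apply, Z_apply, xf, zf]
    exact hud0 k
  · show f (uW cs b c m k * cs.simple b * cs.simple (i : B)) _ = _
    rw [map_mul, map_mul, Equiv.Perm.mul_apply, Equiv.Perm.mul_apply,
      hfs (i : B), Fmap_e a b c m (i : B) i.2.1 i.2.2.1 i.2.2.2, hfs b, hb']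
    have h1 : (S (m := m) i) (Sum.inr (i, k, p1)) = Sum.inl (k, d1) := by
      simp [sf]
    have h2 : (Y (m := m) (E := EE a b c)) (Sum.inl (k, d1)) = Sum.inl (k, d0) := rfl
    rw [h1, h2]
    exact hud0 k
  · show f (uW cs b c m k * cs.simple a * cs.simple (i : B)) _ = _
    rw [map_mul, map_mul, Equiv.Perm.mul_apply, Equiv.Perm.mul_apply,
      hfs (i : B), Fmap_e a b c m (i : B) i.2.1 i.2.2.1 i.2.2.2, hfs a, ha']
    have h1 : (S (m := m) i) (Sum.inr (i, k, p2)) = Sum.inl (k, a0) := by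
      simp [sf]
    have h2 : (X (m := m) (E := EE a b c)) (Sum.inl (k, a0)) = Sum.inl (k, d0) := rfl
    rw [h1, h2]
    exact hud0 k

end withhyp

end Cox2
end St5Aux

namespace St5Aux
open L6 L2

section Cox3

variable {B W : Type*} [Group W] [DecidableEq B] {M : CoxeterMatrix B}
variable (cs : CoxeterSystem M W)
variable {a b c : B} (hab : a ≠ b) (hac : a ≠ c) (hbc : b ≠ c)
variable (m : ℕ) [NeZero m]

include hab hac hbc in
lemma edge (hm : (cs.simple b * cs.simple c) ^ m = 1) (hm1 : 1 < m) :
    ∀ (i : B) (v : V m (EE a b c)), Fmap a b c m i v ≠ v →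
      wvW cs a b c m (Fmap a b c m i v) = wvW cs a b c m v * cs.simple i := by
  have sq : ∀ (x : W) (j : B), x * cs.simple j * cs.simple j = x := by
    intro x j
    rw [mul_assoc, cs.simple_mul_simple_self, mul_one]
  intro i v hne
  by_cases h1 : i = a
  · subst h1
    rw [Fmap_a] at hne ⊢
    rcases v with ⟨k, (_|_|_|_|_|_)⟩ | ⟨j, k, (_|_)⟩
    · rfl
    · rfl
    · exact (sq (uW cs b c m k) i).symm
    · show uW cs b c m k * cs.simple b
        = uW cs b c m k * cs.simple b * cs.simple i * cs.simple i
      rw [sq]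
    · exact absurd rfl hne
    · exact absurd rfl hne
    · exact absurd rfl hne
    · exact absurd rfl hne
  by_cases h2 : i = b
  · subst h2
    rw [Fmap_b a i c m hab] at hne ⊢
    rcases v with ⟨k, (_|_|_|_|_|_)⟩ | ⟨j, k, (_|_)⟩
    · rfl
    · exact (sq (uW cs i c m k) i).symm
    · rfl
    · exact absurd rfl hne
    · show uW cs i c m k * cs.simple a
        = uW cs i c m k * cs.simple a * cs.simple i * cs.simple i
      rw [sq]
    · exact absurd rfl hne
    · exact absurd rfl hne
    · exact absurd rfl hne
  by_cases h3 : i = c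
  · subst h3
    rw [Fmap_c a b i m hac hbc] at hne ⊢
    have husucc := uW_succ cs b i m hm hm1
    rcases v with ⟨k, (_|_|_|_|_|_)⟩ | ⟨j, k, (_|_)⟩
    · -- d0 : target d1 (k-1) : u (k-1) * s b = u k * s i
      show uW cs b i m (k - 1) * cs.simple b = uW cs b i m k * cs.simple i
      have : uW cs b i m k = uW cs b i m (k - 1) * (cs.simple b * cs.simple i) := by
        rw [← husucc (k - 1), sub_add_cancel]
      rw [this, ← mul_assoc, sq]
    · -- d1 : target d0 (k+1) : u (k+1) = u k * s b * s i
      show uW cs b i m (k + 1) = uW cs b i m k * cs.simple b * cs.simple i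
      rw [husucc k, mul_assoc]
    · rfl
    · exact absurd rfl hne
    · exact absurd rfl hne
    · exact (sq (uW cs b i m k * cs.simple a) i).symm
    · exact absurd rfl hne
    · exact absurd rfl hne
  · rw [Fmap_e a b c m i h1 h2 h3] at hne ⊢
    rcases v with ⟨k, (_|_|_|_|_|_)⟩ | ⟨j, k, (_|_)⟩
    · exact absurd rfl hne
    · rfl
    · rfl
    · exact absurd rfl hne
    · exact absurd rfl hne
    · exact absurd rfl hne
    · -- pendant p1 for j : if j = ⟨i,_⟩
      show wvW cs a b c m ((S ⟨i, h1, h2, h3⟩) (Sum.inr (j, k, p1))) = _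
      by_cases hj : j = (⟨i, h1, h2, h3⟩ : EE a b c)
      · have hS : (S (m := m) (⟨i, h1, h2, h3⟩ : EE a b c)) (Sum.inr (j, k, p1))
            = Sum.inl (k, d1) := by simp [sf, hj]
        rw [hS]
        show uW cs b c m k * cs.simple b
          = uW cs b c m k * cs.simple b * cs.simple (j : B) * cs.simple i
        rw [hj]
        exact (sq _ i).symm
      · have hS : (S (m := m) (⟨i, h1, h2, h3⟩ : EE a b c)) (Sum.inr (j, k, p1))
            = Sum.inr (j, k, p1) := by simp [sf, hj]
        rw [hS] at hne
        exact absurd rfl hne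
    · show wvW cs a b c m ((S ⟨i, h1, h2, h3⟩) (Sum.inr (j, k, p2))) = _
      by_cases hj : j = (⟨i, h1, h2, h3⟩ : EE a b c)
      · have hS : (S (m := m) (⟨i, h1, h2, h3⟩ : EE a b c)) (Sum.inr (j, k, p2))
            = Sum.inl (k, a0) := by simp [sf, hj]
        rw [hS]
        show uW cs b c m k * cs.simple a
          = uW cs b c m k * cs.simple a * cs.simple (j : B) * cs.simple i
        rw [hj]
        exact (sq _ i).symm
      · have hS : (S (m := m) (⟨i, h1, h2, h3⟩ : EE a b c)) (Sum.inr (j, k, p2))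
            = Sum.inr (j, k, p2) := by simp [sf, hj]
        rw [hS] at hne
        exact absurd rfl hne

end Cox3
end St5Aux

open St5Aux in
set_option maxHeartbeats 1000000 in
/-- Suppose an odd-angled Coxeter system contains three distinct indices
`a, b, c` with `m a b`, `m a c` finite, divisible by 5 and not by 3, and `m b c` finite and
divisible by 3, while every other unordered pair `{i,j}` has `m i j` infinite (encoded `0`) or
divisible by 3.  Then `W` has a proper finite-index subgroup generated by reflections. -/
theorem statement5 {B : Type*} [Finite B] {M : CoxeterMatrix B} {W : Type*} [Group W]
    (cs : CoxeterSystem M W)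
    (hodd : ∀ i j : B, i ≠ j → M i j = 0 ∨ Odd (M i j))
    (a b c : B) (hab : a ≠ b) (hac : a ≠ c) (hbc : b ≠ c)
    (hMab : M a b ≠ 0) (hMab5 : 5 ∣ M a b) (hMab3 : ¬ (3 ∣ M a b))
    (hMac : M a c ≠ 0) (hMac5 : 5 ∣ M a c) (hMac3 : ¬ (3 ∣ M a c))
    (hMbc : M b c ≠ 0) (hMbc3 : 3 ∣ M b c)
    (hother : ∀ i j : B, i ≠ j →
      ¬ ((i = a ∧ j = b) ∨ (i = b ∧ j = a) ∨ (i = a ∧ j = c) ∨ (i = c ∧ j = a) ∨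
         (i = b ∧ j = c) ∨ (i = c ∧ j = b)) →
      M i j = 0 ∨ 3 ∣ M i j) :
    ∃ T : Set W, (∀ t ∈ T, cs.IsReflection t) ∧ 1 < (Subgroup.closure T).index := by
  classical
  set m := M b c with hmdef
  haveI : NeZero m := ⟨hMbc⟩
  have hm1 : 1 < m := by
    have h3 : 3 ≤ m := Nat.le_of_dvd (Nat.pos_of_ne_zero hMbc) hMbc3
    omega
  -- Liftability of the permutation representation
  have hLift : M.IsLiftable (Fmap a b c m) := by
    have hexcl3 : ∀ j : B, ¬(j = a) → ¬(j = b) → ¬(j = c) →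
        (M j a = 0 ∨ 3 ∣ M j a) ∧ (M j b = 0 ∨ 3 ∣ M j b) ∧ (M j c = 0 ∨ 3 ∣ M j c) := by
      intro j hja hjb hjc
      refine ⟨hother j a hja ?_, hother j b hjb ?_, hother j c hjc ?_⟩ <;>
        · rintro (⟨h, _⟩ | ⟨h, _⟩ | ⟨h, _⟩ | ⟨h, _⟩ | ⟨h, _⟩ | ⟨h, _⟩)
          exacts [hja h, hjb h, hja h, hjc h, hjb h, hjc h]
    intro i j
    by_cases hia : i = a
    · by_cases hja : j = a
      · rw [hia, hja, M.diagonal, pow_one, Fmap_a]; exact X_sq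
      by_cases hjb : j = b
      · rw [hia, hjb, Fmap_a, Fmap_b a b c m hab]; exact pow_of_dvd XY_pow hMab5
      by_cases hjc : j = c
      · rw [hia, hjc, Fmap_a, Fmap_c a b c m hac hbc]; exact pow_of_dvd XZ_pow hMac5
      · rw [hia, Fmap_a, Fmap_e a b c m j hja hjb hjc, M.symmetric a j]
        rcases (hexcl3 j hja hjb hjc).1 with h0 | h3
        · rw [h0, pow_zero]
        · exact pow_of_dvd (swap_pow (SX_pow (m := m) (⟨j, ⟨by assumption, by assumption, by assumption⟩⟩ : EE a b c))) h3
    by_cases hib : i = b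
    · by_cases hja : j = a
      · rw [hib, hja, Fmap_a, Fmap_b a b c m hab, M.symmetric b a]
        exact pow_of_dvd (swap_pow XY_pow) hMab5
      by_cases hjb : j = b
      · rw [hib, hjb, M.diagonal, pow_one, Fmap_b a b c m hab]; exact Y_sq
      by_cases hjc : j = c
      · rw [hib, hjc, Fmap_b a b c m hab, Fmap_c a b c m hac hbc]
        exact YZ_pow hMbc3
      · rw [hib, Fmap_b a b c m hab, Fmap_e a b c m j hja hjb hjc, M.symmetric b j]
        rcases (hexcl3 j hja hjb hjc).2.1 with h0 | h3
        · rw [h0, pow_zero]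
        · exact pow_of_dvd (swap_pow (SY_pow (m := m) (⟨j, ⟨by assumption, by assumption, by assumption⟩⟩ : EE a b c))) h3
    by_cases hic : i = c
    · by_cases hja : j = a
      · rw [hic, hja, Fmap_a, Fmap_c a b c m hac hbc, M.symmetric c a]
        exact pow_of_dvd (swap_pow XZ_pow) hMac5
      by_cases hjb : j = b
      · rw [hic, hjb, Fmap_b a b c m hab, Fmap_c a b c m hac hbc, M.symmetric c b]
        exact swap_pow (YZ_pow hMbc3)
      by_cases hjc : j = c
      · rw [hic, hjc, M.diagonal, pow_one, Fmap_c a b c m hac hbc]; exact Z_sq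
      · rw [hic, Fmap_c a b c m hac hbc, Fmap_e a b c m j hja hjb hjc, M.symmetric c j]
        rcases (hexcl3 j hja hjb hjc).2.2 with h0 | h3
        · rw [h0, pow_zero]
        · exact pow_of_dvd (swap_pow (SZ_pow (m := m) (⟨j, ⟨by assumption, by assumption, by assumption⟩⟩ : EE a b c))) h3
    · -- i is an extra generator
      by_cases hja : j = a
      · rw [hja, Fmap_a, Fmap_e a b c m i hia hib hic]
        rcases (hexcl3 i hia hib hic).1 with h0 | h3
        · rw [h0, pow_zero]
        · exact pow_of_dvd (SX_pow (m := m) (⟨i, ⟨by assumption, by assumption, by assumption⟩⟩ : EE a b c)) h3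
      by_cases hjb : j = b
      · rw [hjb, Fmap_b a b c m hab, Fmap_e a b c m i hia hib hic]
        rcases (hexcl3 i hia hib hic).2.1 with h0 | h3
        · rw [h0, pow_zero]
        · exact pow_of_dvd (SY_pow (m := m) (⟨i, ⟨by assumption, by assumption, by assumption⟩⟩ : EE a b c)) h3
      by_cases hjc : j = c
      · rw [hjc, Fmap_c a b c m hac hbc, Fmap_e a b c m i hia hib hic]
        rcases (hexcl3 i hia hib hic).2.2 with h0 | h3
        · rw [h0, pow_zero]
        · exact pow_of_dvd (SZ_pow (m := m) (⟨i, ⟨by assumption, by assumption, by assumption⟩⟩ : EE a b c)) h3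
      by_cases hji : j = i
      · rw [hji, M.diagonal, pow_one, Fmap_e a b c m i hia hib hic]
        exact S_sq _
      · rw [Fmap_e a b c m i hia hib hic, Fmap_e a b c m j hja hjb hjc]
        have hexcl : ¬ ((i = a ∧ j = b) ∨ (i = b ∧ j = a) ∨ (i = a ∧ j = c) ∨
            (i = c ∧ j = a) ∨ (i = b ∧ j = c) ∨ (i = c ∧ j = b)) := by
          rintro (⟨h, _⟩ | ⟨h, _⟩ | ⟨h, _⟩ | ⟨h, _⟩ | ⟨h, _⟩ | ⟨h, _⟩)
          exacts [hia h, hib h, hia h, hic h, hib h, hic h]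
        rcases hother i j (fun h => hji h.symm) hexcl with h0 | h3
        · rw [h0, pow_zero]
        · refine pow_of_dvd (SS_pow ?_) h3
          exact fun h => hji (congrArg Subtype.val h).symm
  -- The homomorphism
  set f : W →* Equiv.Perm (V m (EE a b c)) := cs.lift ⟨Fmap a b c m, hLift⟩ with hfdef
  have hfs : ∀ i : B, f (cs.simple i) = Fmap a b c m i := fun i =>
    cs.lift_apply_simple hLift i
  have hFinv : ∀ i : B, (Fmap a b c m i)⁻¹ = Fmap a b c m i := by
    intro i
    have h := hLift i i
    rw [M.diagonal, pow_one] at h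
    exact inv_eq_of_mul_eq_one_right h
  set x0 : V m (EE a b c) := Sum.inl (0, L6.d0) with hx0def
  set T : Set W := {t : W | cs.IsReflection t ∧ f t x0 = x0} with hTdef
  refine ⟨T, fun t ht => ht.1, ?_⟩
  set H := Subgroup.closure T with hHdef
  have hmrel : (cs.simple b * cs.simple c) ^ m = 1 := cs.simple_mul_simple_pow b c
  have hHfix : ∀ h ∈ H, f h x0 = x0 := by
    intro h hh
    refine Subgroup.closure_induction (fun t ht => ht.2) (by simp) ?_ ?_ hh
    · intro x y _ _ ihx ihy
      rw [map_mul, Equiv.Perm.mul_apply, ihy, ihx]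
    · intro x _ ih
      rw [map_inv]
      calc (f x)⁻¹ x0 = (f x)⁻¹ (f x x0) := by rw [ih]
      _ = x0 := Equiv.symm_apply_apply _ _
  have hL : ∀ v : V m (EE a b c), f (wvW cs a b c m v) v = x0 :=
    trans_L cs hab hac hbc m f hfs
  have hLinv : ∀ v : V m (EE a b c), (f (wvW cs a b c m v))⁻¹ x0 = v := by
    intro v
    rw [← hL v]
    exact Equiv.symm_apply_apply _ _
  -- Main claim
  have claim : ∀ w : W, ∃ h ∈ H, w = h * wvW cs a b c m ((f w)⁻¹ x0) := by
    intro w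
    obtain ⟨l, rfl⟩ := cs.wordProd_surjective w
    induction l using List.reverseRecOn with
    | nil =>
        refine ⟨1, one_mem _, ?_⟩
        rw [cs.wordProd_nil, one_mul, map_one, inv_one]
        show (1 : W) = wvW cs a b c m ((1 : Equiv.Perm (V m (EE a b c))) x0)
        rw [Equiv.Perm.one_apply]
        show (1 : W) = uW cs b c m 0
        rw [uW, ZMod.val_zero, pow_zero]
    | append_singleton l i ih =>
        obtain ⟨h, hh, heq⟩ := ih
        rw [cs.wordProd_append, cs.wordProd_singleton]
        set w := cs.wordProd l with hwdef
        set v : V m (EE a b c) := (f w)⁻¹ x0 with hvdef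
        have hvnew : (f (w * cs.simple i))⁻¹ x0 = Fmap a b c m i v := by
          rw [map_mul, hfs i, mul_inv_rev, Equiv.Perm.mul_apply, ← hvdef, hFinv i]
        by_cases hfix : Fmap a b c m i v = v
        · set t : W := wvW cs a b c m v * cs.simple i * (wvW cs a b c m v)⁻¹ with htdef
          have htT : t ∈ T := by
            constructor
            · exact ⟨wvW cs a b c m v, i, rfl⟩
            · rw [htdef, map_mul, map_mul, map_inv, hfs i, Equiv.Perm.mul_apply,
                Equiv.Perm.mul_apply, hLinv v, hfix]
              exact hL v
          refine ⟨h * t, mul_mem hh (Subgroup.subset_closure htT), ?_⟩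
          rw [hvnew, hfix, heq, htdef]
          group
        · refine ⟨h, hh, ?_⟩
          rw [hvnew, edge cs hab hac hbc m hmrel hm1 i v hfix, heq, mul_assoc]
  -- properness
  have hsa : cs.simple a ∉ H := by
    intro hmem
    have hfix := hHfix _ hmem
    rw [hfs a, Fmap_a] at hfix
    rw [hx0def] at hfix
    simp only [X_apply, xf] at hfix
    exact L6.noConfusion (congrArg Prod.snd (Sum.inl.inj hfix))
  -- finite index
  have hsurj : Function.Surjective (fun v : V m (EE a b c) =>
      (QuotientGroup.mk ((wvW cs a b c m v)⁻¹) : W ⧸ H)) := by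
    intro q
    obtain ⟨g, rfl⟩ := QuotientGroup.mk_surjective q
    obtain ⟨h, hh, heq⟩ := claim g⁻¹
    refine ⟨(f g⁻¹)⁻¹ x0, ?_⟩
    have hwv : (wvW cs a b c m ((f g⁻¹)⁻¹ x0))⁻¹ = g * h := by
      have : wvW cs a b c m ((f g⁻¹)⁻¹ x0) = h⁻¹ * g⁻¹ := by
        rw [eq_inv_mul_iff_mul_eq]
        exact heq.symm
      rw [this, mul_inv_rev, inv_inv, inv_inv]
    show (QuotientGroup.mk ((wvW cs a b c m ((f g⁻¹)⁻¹ x0))⁻¹) : W ⧸ H) = _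
    rw [hwv]
    exact QuotientGroup.mk_mul_of_mem g hh
  haveI hfin : Finite (W ⧸ H) := Finite.of_surjective _ hsurj
  have hne : (QuotientGroup.mk (cs.simple a) : W ⧸ H) ≠
      (QuotientGroup.mk (1 : W) : W ⧸ H) := by
    intro hq
    rw [QuotientGroup.eq] at hq
    rw [mul_one, H.inv_mem_iff] at hq
    exact hsa hq
  haveI : Nontrivial (W ⧸ H) := ⟨_, _, hne⟩
  show 1 < Nat.card (W ⧸ H)
  exact Finite.one_lt_card
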